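/- Let G be a connected groupoid with finitely many arrows and a nonempty finite set Ω of objects, and let s be an action on G. Define φ(α) = (|Ω| / |Arr(G)|) · exp(i·s(α)), where |Arr(G)| is the total number of arrows of G. Then φ satisfies the reproducing property φ ⋆ φ = φ with respect to the convolution product. -/

import Mathlib

open CategoryTheory
open scoped ComplexOrder Classical

universe u

/-- The set of arrows of a groupoid with object type `Ω`. -/
abbrev GArrow (Ω : Type u) [Groupoid Ω] : Type u := Σ x y : Ω, x ⟶ y

namespace GArrow

variable {Ω : Type u} [Groupoid Ω]

/-- Source of an arrow. -/
def src (α : GArrow Ω) : Ω := α.1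

/-- Target of an arrow. -/
def tgt (α : GArrow Ω) : Ω := α.2.1

/-- Inverse of an arrow. -/
def inv (α : GArrow Ω) : GArrow Ω := ⟨α.2.1, α.1, Groupoid.inv α.2.2⟩

/-- The identity arrow at an object. -/
def id (x : Ω) : GArrow Ω := ⟨x, x, 𝟙 x⟩

/-- The composite `α ∘ β` (first apply `β`, then `α`), defined when `t(β) = s(α)`. -/
def comp (α β : GArrow Ω) (h : β.tgt = α.src) : GArrow Ω :=
  ⟨β.1, α.2.1, (β.2.2 ≫ eqToHom h) ≫ α.2.2⟩

/-- The composite `α⁻¹ ∘ β`, defined when `t(α) = t(β)`. -/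
def invComp (α β : GArrow Ω) (h : α.tgt = β.tgt) : GArrow Ω :=
  ⟨β.1, α.1, (β.2.2 ≫ eqToHom h.symm) ≫ Groupoid.inv α.2.2⟩

end GArrow

/-- A function on the arrows of a groupoid is positive semi-definite if for all
`ξ : Fin n → ℂ` and arrows `α : Fin n → GArrow Ω`, the sum over pairs `(i, j)` with
`t(α i) = t(α j)` of `conj (ξ i) * ξ j * φ ((α i)⁻¹ ∘ α j)` is a nonnegative real number. -/
def IsPosSemidefFun {Ω : Type u} [Groupoid Ω] (φ : GArrow Ω → ℂ) : Prop :=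
  ∀ (n : ℕ) (ξ : Fin n → ℂ) (α : Fin n → GArrow Ω),
    0 ≤ ∑ i, ∑ j,
      if h : (α i).tgt = (α j).tgt then
        (starRingEnd ℂ) (ξ i) * ξ j * φ (GArrow.invComp (α i) (α j) h)
      else 0

/-- The convolution product on complex functions on the arrows of a finite groupoid. -/
noncomputable def conv {Ω : Type u} [Groupoid Ω] [Fintype Ω] [∀ x y : Ω, Fintype (x ⟶ y)]
    (f g : GArrow Ω → ℂ) (γ : GArrow Ω) : ℂ :=
  ∑ α : GArrow Ω, ∑ β : GArrow Ω,
    if h : β.tgt = α.src then (if GArrow.comp α β h = γ then f α * g β else 0) else 0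

/-- The involution `f*(α) = conj (f (α⁻¹))` on functions on arrows. -/
def starFun {Ω : Type u} [Groupoid Ω] (f : GArrow Ω → ℂ) (α : GArrow Ω) : ℂ :=
  (starRingEnd ℂ) (f (GArrow.inv α))

/-- The unit of the convolution algebra: the indicator of the set of identity arrows. -/
noncomputable def convOne {Ω : Type u} [Groupoid Ω] (γ : GArrow Ω) : ℂ :=
  if γ = GArrow.id γ.src then 1 else 0

/-- The indicator function of a single arrow. -/
noncomputable def delta {Ω : Type u} [Groupoid Ω] (α : GArrow Ω) (β : GArrow Ω) : ℂ :=
  if β = α then 1 else 0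

section Aux

variable {Ω : Type u} [Groupoid Ω]

lemma GArrow.comp_cancel (γ β : GArrow Ω) (hb : β.1 = γ.1) :
    GArrow.comp (GArrow.comp γ (GArrow.inv β) hb) β rfl = γ := by
  obtain ⟨x, y, f⟩ := γ
  obtain ⟨c, d, k⟩ := β
  dsimp [GArrow.src, GArrow.tgt] at hb
  subst hb
  simp [GArrow.comp, GArrow.inv, GArrow.src, GArrow.tgt]
  erw [eqToHom_refl, Category.id_comp, IsIso.hom_inv_id_assoc]

lemma GArrow.comp_unique (α β γ : GArrow Ω) (h : β.tgt = α.src)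
    (hc : GArrow.comp α β h = γ) :
    ∃ hb : β.1 = γ.1, α = GArrow.comp γ (GArrow.inv β) hb := by
  obtain ⟨a, b, g⟩ := α
  obtain ⟨c, d, k⟩ := β
  dsimp [GArrow.tgt, GArrow.src] at h
  subst h
  subst hc
  refine ⟨rfl, ?_⟩
  simp [GArrow.comp, GArrow.inv, GArrow.src, GArrow.tgt]

lemma card_source_eq [Fintype Ω] [∀ x y : Ω, Fintype (x ⟶ y)]
    (hconn : ∀ x y : Ω, Nonempty (x ⟶ y)) (x x' : Ω) :
    Fintype.card (Σ y : Ω, x ⟶ y) = Fintype.card (Σ y : Ω, x' ⟶ y) := by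
  obtain ⟨f⟩ := hconn x' x
  exact Fintype.card_congr
    { toFun := fun p => ⟨p.1, f ≫ p.2⟩
      invFun := fun p => ⟨p.1, Groupoid.inv f ≫ p.2⟩
      left_inv := fun p => by simp
      right_inv := fun p => by simp }

end Aux

/-- Let `G` be a connected groupoid with finitely many arrows and a nonempty finite set of
objects, and `s` an action on `G`. Then `φ(α) = (|Ω| / |Arr(G)|) · exp(i·s(α))` satisfies
the reproducing property `φ ⋆ φ = φ` for the convolution product. -/
theorem exp_action_reproducing {Ω : Type u} [Groupoid Ω] [Fintype Ω] [Nonempty Ω]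
    [∀ x y : Ω, Fintype (x ⟶ y)]
    (hconn : ∀ x y : Ω, Nonempty (x ⟶ y))
    (s : GArrow Ω → ℝ)
    (h1 : ∀ x : Ω, s (GArrow.id x) = 0)
    (h2 : ∀ (α β : GArrow Ω) (h : β.tgt = α.src),
      s (GArrow.comp α β h) = s α + s β)
    (φ : GArrow Ω → ℂ)
    (hφ : ∀ α : GArrow Ω,
      φ α = ((Fintype.card Ω : ℂ) / (Fintype.card (GArrow Ω) : ℂ)) *
        Complex.exp (Complex.I * (s α : ℂ))) :
    ∀ γ : GArrow Ω, conv φ φ γ = φ γ := by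
  intro γ
  set c : ℂ := (Fintype.card Ω : ℂ) / (Fintype.card (GArrow Ω) : ℂ) with hc
  -- each nonzero term of the convolution equals c * φ γ
  have hterm : ∀ (β : GArrow Ω) (hb : β.1 = γ.1),
      φ (GArrow.comp γ (GArrow.inv β) hb) * φ β = c * φ γ := by
    intro β hb
    have hs : s (GArrow.comp γ (GArrow.inv β) hb) + s β = s γ := by
      rw [← h2 (GArrow.comp γ (GArrow.inv β) hb) β rfl, GArrow.comp_cancel γ β hb]
    rw [hφ, hφ, hφ, mul_mul_mul_comm, ← Complex.exp_add, ← mul_add,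
      ← Complex.ofReal_add, hs, mul_assoc]
  -- collapse the inner sum over α
  have key : ∀ β : GArrow Ω,
      (∑ α : GArrow Ω, if h : β.tgt = α.src then
        (if GArrow.comp α β h = γ then φ α * φ β else 0) else 0)
      = if β.1 = γ.1 then c * φ γ else 0 := by
    intro β
    by_cases hb : β.1 = γ.1
    · rw [if_pos hb, Finset.sum_eq_single (GArrow.comp γ (GArrow.inv β) hb)]
      · have hsrc : β.tgt = (GArrow.comp γ (GArrow.inv β) hb).src := rfl
        rw [dif_pos hsrc, if_pos (GArrow.comp_cancel γ β hb), hterm β hb]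
      · intro α _ hne
        split_ifs with h hc'
        · obtain ⟨hb', ha⟩ := GArrow.comp_unique α β γ h hc'
          exact absurd ha hne
        · rfl
        · rfl
      · intro hmem
        exact absurd (Finset.mem_univ _) hmem
    · rw [if_neg hb]
      apply Finset.sum_eq_zero
      intro α _
      split_ifs with h hc'
      · obtain ⟨hb', _⟩ := GArrow.comp_unique α β γ h hc'
        exact absurd hb' hb
      · rfl
      · rfl
  -- rewrite the convolution
  rw [conv, Finset.sum_comm]
  simp_rw [key]
  -- sum over the sigma type
  rw [← Finset.univ_sigma_univ, Finset.sum_sigma]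
  have hinner : ∀ x : Ω,
      (∑ p : Σ y : Ω, x ⟶ y, if (⟨x, p⟩ : GArrow Ω).1 = γ.1 then c * φ γ else 0)
      = if x = γ.1 then (Fintype.card (Σ y : Ω, γ.1 ⟶ y) : ℂ) * (c * φ γ) else 0 := by
    intro x
    by_cases hx : x = γ.1
    · subst hx
      simp [Finset.sum_const, nsmul_eq_mul]
    · simp [hx]
  simp_rw [hinner]
  rw [Finset.sum_ite_eq' Finset.univ γ.1, if_pos (Finset.mem_univ _)]
  -- counting
  set m : ℕ := Fintype.card (Σ y : Ω, γ.1 ⟶ y) with hm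
  have hcard : Fintype.card (GArrow Ω) = Fintype.card Ω * m := by
    rw [Fintype.card_sigma]
    rw [Finset.sum_congr rfl (fun x _ => card_source_eq hconn x γ.1),
      Finset.sum_const, Finset.card_univ, smul_eq_mul, hm]
  have hm0 : m ≠ 0 := by
    have : Nonempty (Σ y : Ω, γ.1 ⟶ y) := ⟨⟨γ.1, (hconn γ.1 γ.1).some⟩⟩
    exact Fintype.card_ne_zero
  have hΩ0 : (Fintype.card Ω : ℂ) ≠ 0 := by
    exact_mod_cast Fintype.card_ne_zero
  have hmc : (m : ℂ) * c = 1 := by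
    rw [hc, hcard]
    push_cast
    field_simp
  rw [← mul_assoc, hmc, one_mul]
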